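/- Let {f̂(n)}_{n∈ℤ} be complex numbers such that f̂(n) + f̂(−n) ∈ K(θ1) for all n ≥ 1, for some θ1 ∈ [0, π/2), and suppose the series f(x) = Σ_{n=−∞}^{∞} f̂(n)e^{inx} converges at every x to a continuous function f ∈ C_{2π}. Then there exists C > 0 such that Σ_{k=2n+1}^{∞} |f̂(k) + f̂(−k)| ≤ C·E_n(f) for all n ≥ 1. -/

import Mathlib

open Filter Complex Real

noncomputable section

/-- `K(θ) = {z ∈ ℂ : |arg z| ≤ θ}`. -/
def Kset (θ : ℝ) : Set ℂ := {z : ℂ | |Complex.arg z| ≤ θ}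

/-- `En n f` : the best uniform approximation of `f` by trigonometric polynomials
`T(x) = Σ_{k=-n}^{n} c_k e^{ikx}` of degree at most `n`. -/
def En (n : ℕ) (f : ℝ → ℂ) : ℝ :=
  sInf { y : ℝ | ∃ c : ℤ → ℂ,
    y = ⨆ x : ℝ, ‖f x -
      ∑ k ∈ Finset.Icc (-(n : ℤ)) (n : ℤ), c k * Complex.exp ((k : ℂ) * (x : ℂ) * Complex.I)‖ }

namespace S7

def ee (k : ℤ) (x : ℝ) : ℂ := Complex.exp ((k:ℂ) * (x:ℂ) * Complex.I)

lemma ee_cont (k : ℤ) : Continuous (ee k) := by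
  unfold ee; fun_prop

lemma ee_mul (j l : ℤ) (x : ℝ) : ee j x * ee l x = ee (j+l) x := by
  unfold ee
  rw [← Complex.exp_add]
  push_cast
  ring_nf

lemma ee_abs (k : ℤ) (x : ℝ) : ‖ee k x‖ = 1 := by
  unfold ee
  rw [Complex.norm_exp]
  simp [mul_assoc]

lemma ee_intble (k : ℤ) : IntervalIntegrable (ee k) MeasureTheory.volume 0 (2*π) :=
  (ee_cont k).intervalIntegrable _ _

lemma integral_ee (k : ℤ) :
    ∫ x in (0:ℝ)..(2*π), ee k x = if k = 0 then ((2*π : ℝ):ℂ) else 0 := by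
  unfold ee
  rcases eq_or_ne k 0 with h | h
  · simp [h]
  · have hc : ((k:ℂ) * Complex.I) ≠ 0 := by
      simp [Complex.ext_iff, h]
    have := integral_exp_mul_complex (a := 0) (b := 2*π) hc
    rw [if_neg h]
    have heq : ∀ x : ℝ, (k:ℂ) * (x:ℂ) * Complex.I = ((k:ℂ)*Complex.I) * (x:ℝ) := by
      intro x; ring
    simp_rw [heq]
    rw [this]
    have h1 : Complex.exp ((k:ℂ)*Complex.I*((2*π:ℝ):ℂ)) = 1 := by
      rw [show ((k:ℂ)*Complex.I*((2*π:ℝ):ℂ)) = (k:ℂ) * (2*(π:ℂ)*Complex.I) by push_cast; ring]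
      exact Complex.exp_int_mul_two_pi_mul_I k
    rw [h1]
    simp

/-- symmetric sum reindex -/
lemma sum_Icc_symm (F : ℤ → ℂ) (N : ℕ) :
    ∑ k ∈ Finset.Icc (-(N:ℤ)) (N:ℤ), F k
      = F 0 + ∑ k ∈ Finset.Icc 1 N, (F k + F (-(k:ℤ))) := by
  induction N with
  | zero => simp
  | succ n ih =>
    have h1 : Finset.Icc (-(n+1:ℤ)) (n+1:ℤ)
        = insert (-(n+1:ℤ)) (insert ((n+1:ℤ)) (Finset.Icc (-(n:ℤ)) (n:ℤ))) := by
      ext k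
      simp only [Finset.mem_Icc, Finset.mem_insert]
      omega
    have h2 : Finset.Icc 1 (n+1) = insert (n+1) (Finset.Icc 1 n) := by
      ext k; simp only [Finset.mem_Icc, Finset.mem_insert]; omega
    simp only [Nat.cast_add, Nat.cast_one, Nat.cast_ofNat]
    rw [h1, Finset.sum_insert, Finset.sum_insert, h2, Finset.sum_insert]
    · push_cast at ih ⊢
      rw [ih]; ring
    · simp
    · simp
    · simp only [Finset.mem_insert, Finset.mem_Icc]
      push_cast
      omega


lemma count_pairs (N : ℕ) (k : ℤ) :
    (((Finset.range (N+1)) ×ˢ (Finset.range (N+1))).filter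
      (fun p => (p.1:ℤ) - (p.2:ℤ) = k)).card = ((N:ℤ) + 1 - |k|).toNat := by
  classical
  have hbij : (((Finset.range (N+1)) ×ˢ (Finset.range (N+1))).filter
      (fun p => (p.1:ℤ) - (p.2:ℤ) = k)).card
      = (Finset.Icc (max 0 k) (min (N:ℤ) ((N:ℤ)+k))).card := by
    apply Finset.card_bij (fun p _ => (p.1 : ℤ))
    · intro p hp
      simp only [Finset.mem_filter, Finset.mem_product, Finset.mem_range] at hp
      simp only [Finset.mem_Icc, le_max_iff, max_le_iff, le_min_iff]
      omega
    · intro p hp q hq hpq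
      simp only [Finset.mem_filter, Finset.mem_product, Finset.mem_range] at hp hq
      have : p.1 = q.1 := by exact_mod_cast hpq
      have : p.2 = q.2 := by omega
      exact Prod.ext ‹p.1 = q.1› this
    · intro b hb
      simp only [Finset.mem_Icc, le_min_iff, max_le_iff] at hb
      refine ⟨(b.toNat, (b - k).toNat), ?_, ?_⟩
      · simp only [Finset.mem_filter, Finset.mem_product, Finset.mem_range]
        omega
      · omega
  rw [hbij, Int.card_Icc]
  congr 1
  rcases le_or_gt 0 k with h | h
  · rw [abs_of_nonneg h]; omega
  · rw [abs_of_neg h]; omega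

lemma toNat_cast_real (N : ℕ) (k : ℤ) :
    ((((N:ℤ) + 1 - |k|).toNat : ℝ)) = max 0 ((N:ℝ) + 1 - |(k:ℝ)|) := by
  have habs : |(k:ℝ)| = ((|k| : ℤ) : ℝ) := by rw [Int.cast_abs]
  rcases le_or_gt (|k|) ((N:ℤ)+1) with h | h
  · have h0 : (((N:ℤ)+1-|k|).toNat : ℤ) = (N:ℤ)+1-|k| := Int.toNat_of_nonneg (by omega)
    rw [max_eq_right, habs]
    · exact_mod_cast h0
    · rw [habs]; exact_mod_cast (by omega : (0:ℤ) ≤ (N:ℤ)+1-|k|)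
  · rw [Int.toNat_eq_zero.mpr (by omega), max_eq_left]
    · simp
    · rw [habs]; exact_mod_cast (by omega : ((N:ℤ)+1-|k| : ℤ) ≤ 0)

def FK (N : ℕ) (x : ℝ) : ℝ := Complex.normSq (∑ j ∈ Finset.range (N+1), ee (j:ℤ) x)

lemma FK_nonneg (N : ℕ) (x : ℝ) : 0 ≤ FK N x := Complex.normSq_nonneg _

lemma FK_cont (N : ℕ) : Continuous (FK N) := by
  unfold FK
  exact Complex.continuous_normSq.comp (continuous_finset_sum _ (fun j _ => ee_cont _))

lemma FK_eq (N : ℕ) (x : ℝ) :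
    ((FK N x : ℝ) : ℂ) = ∑ j ∈ Finset.range (N+1), ∑ l ∈ Finset.range (N+1),
      ee ((j:ℤ) - (l:ℤ)) x := by
  unfold FK
  rw [Complex.normSq_eq_conj_mul_self]
  rw [map_sum, Finset.sum_mul_sum]
  rw [Finset.sum_comm]
  congr 1; ext j; congr 1; ext l
  rw [show (j:ℤ) - (l:ℤ) = (-l) + j by ring, ← ee_mul]
  congr 1
  unfold ee
  rw [← Complex.exp_conj]
  congr 1
  simp [Complex.ext_iff]

lemma integral_FK_ee (N : ℕ) (k : ℤ) :
    ∫ x in (0:ℝ)..(2*π), ((FK N x : ℝ):ℂ) * ee (-k) x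
      = (2*π) * (max 0 ((N:ℝ) + 1 - |(k:ℝ)|)) := by
  classical
  have h1 : ∀ x : ℝ, ((FK N x : ℝ):ℂ) * ee (-k) x
      = ∑ p ∈ (Finset.range (N+1)) ×ˢ (Finset.range (N+1)),
          ee ((p.1:ℤ) - (p.2:ℤ) - k) x := by
    intro x
    rw [FK_eq, Finset.sum_mul, Finset.sum_product]
    congr 1; ext j
    rw [Finset.sum_mul]
    congr 1; ext l
    rw [ee_mul]
    norm_num [sub_eq_add_neg]
  simp_rw [h1]
  rw [intervalIntegral.integral_finset_sum (fun p _ => ee_intble _)]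
  simp_rw [integral_ee, sub_eq_zero]
  rw [← Finset.sum_filter]
  rw [Finset.sum_const, count_pairs]
  rw [nsmul_eq_mul]
  rw [show ((((N:ℤ) + 1 - |k|).toNat : ℂ)) = ((((N:ℤ) + 1 - |k|).toNat : ℝ) : ℂ) by push_cast; ring]
  rw [toNat_cast_real]
  push_cast
  ring

def cc (N : ℕ) (k : ℤ) : ℝ := max 0 ((N:ℝ) + 1 - |(k:ℝ)|)

lemma integral_FK_ee' (N : ℕ) (k : ℤ) :
    ∫ x in (0:ℝ)..(2*π), ((FK N x : ℝ):ℂ) * ee (-k) x = ((2*π) * cc N k : ℝ) := by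
  rw [integral_FK_ee]; push_cast [cc]; ring

def vv (N : ℕ) (k : ℤ) : ℝ := 2 * cc (2*N+1) k / (2*N+2) - cc N k / (N+1)

lemma abs_k_nonneg (k : ℤ) : (0:ℝ) ≤ |(k:ℝ)| := abs_nonneg _

lemma cc_of_le {N : ℕ} {k : ℤ} (h : |(k:ℝ)| ≤ (N:ℝ)+1) : cc N k = (N:ℝ)+1-|(k:ℝ)| := by
  unfold cc; rw [max_eq_right]; linarith

lemma cc_nonneg (N : ℕ) (k : ℤ) : 0 ≤ cc N k := le_max_left _ _

lemma cc_le {N : ℕ} {k : ℤ} (h : (N:ℝ)+1-|(k:ℝ)| ≤ (N:ℝ)+1) : cc N k ≤ (N:ℝ)+1 := by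
  unfold cc
  rw [max_le_iff]
  constructor <;> [positivity; linarith]

lemma vv_eq_one {N : ℕ} {k : ℤ} (h : |(k:ℝ)| ≤ (N:ℝ)+1) : vv N k = 1 := by
  unfold vv
  rw [cc_of_le (by push_cast; linarith), cc_of_le h]
  have hN : (0:ℝ) < (N:ℝ)+1 := by positivity
  push_cast
  field_simp
  ring

lemma vv_nonneg (N : ℕ) (k : ℤ) : 0 ≤ vv N k := by
  rcases le_or_gt (|(k:ℝ)|) ((N:ℝ)+1) with h | h
  · rw [vv_eq_one h]; norm_num
  · unfold vv
    have h0 : cc N k = 0 := by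
      unfold cc; rw [max_eq_left]; linarith
    rw [h0]
    have := cc_nonneg (2*N+1) k
    have hN : (0:ℝ) < 2*(N:ℝ)+2 := by positivity
    rw [zero_div, sub_zero]
    positivity

lemma vv_le_half {N : ℕ} {k : ℤ} (hN : 1 ≤ N) (h : 2*(N:ℝ)+1 ≤ |(k:ℝ)|) : vv N k ≤ 1/2 := by
  unfold vv
  have h0 : cc N k = 0 := by
    unfold cc; rw [max_eq_left]; linarith
  rw [h0, zero_div, sub_zero]
  have h1 : cc (2*N+1) k ≤ 1 := by
    unfold cc
    rw [max_le_iff]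
    constructor
    · norm_num
    · push_cast; linarith
  have hN1 : (1:ℝ) ≤ (N:ℝ) := by exact_mod_cast hN
  calc 2 * cc (2*N+1) k / (2*(N:ℝ)+2) ≤ 2 * 1 / 4 := by
        apply div_le_div₀ (by norm_num)
        · linarith [cc_nonneg (2*N+1) k]
        · norm_num
        · linarith
    _ ≤ 1/2 := by norm_num

lemma vv_mono {N M : ℕ} (hNM : N ≤ M) (k : ℤ) : vv N k ≤ vv M k := by
  rcases le_or_gt (|(k:ℝ)|) ((N:ℝ)+1) with h | h
  · rw [vv_eq_one h, vv_eq_one (le_trans h (by exact_mod_cast by push_cast; norm_num; exact_mod_cast hNM))]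
  rcases le_or_gt (|(k:ℝ)|) ((M:ℝ)+1) with h2 | h2
  · rw [vv_eq_one h2]
    -- vv N k ≤ 1
    unfold vv
    have h0 : cc N k = 0 := by unfold cc; rw [max_eq_left]; linarith
    rw [h0, zero_div, sub_zero]
    have h1 : cc (2*N+1) k ≤ (N:ℝ)+1 := by
      unfold cc
      rw [max_le_iff]
      refine ⟨by positivity, by push_cast; linarith⟩
    rw [div_le_one (by positivity)]
    linarith
  · -- both in ramp region
    unfold vv
    have h0N : cc N k = 0 := by unfold cc; rw [max_eq_left]; linarith
    have h0M : cc M k = 0 := by unfold cc; rw [max_eq_left]; linarith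
    rw [h0N, h0M, zero_div, sub_zero, zero_div, sub_zero]
    set t := |(k:ℝ)| with ht
    have ht0 : 0 ≤ t := abs_nonneg _
    have hNM' : (N:ℝ) ≤ (M:ℝ) := by exact_mod_cast hNM
    have e1 : cc (2*N+1) k = max 0 (2*(N:ℝ)+2 - t) := by unfold cc; push_cast; ring_nf; rfl
    have e2 : cc (2*M+1) k = max 0 (2*(M:ℝ)+2 - t) := by unfold cc; push_cast; ring_nf; rfl
    rw [e1, e2]
    rcases le_or_gt (2*(N:ℝ)+2-t) 0 with hc | hc
    · rw [max_eq_left hc]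
      have hmx : (0:ℝ) ≤ max 0 (2*(M:ℝ)+2-t) := le_max_left _ _
      have : (2:ℝ)*0/(2*(N:ℝ)+2) = 0 := by norm_num
      rw [this]
      apply div_nonneg (by linarith) (by positivity)
    · rw [max_eq_right (le_of_lt hc), max_eq_right (by linarith)]
      rw [div_le_div_iff₀ (by linarith) (by linarith)]
      nlinarith

lemma vv_eq_zero {N : ℕ} {k : ℤ} (h : 2*(N:ℝ)+2 ≤ |(k:ℝ)|) : vv N k = 0 := by
  unfold vv
  have h0 : cc N k = 0 := by unfold cc; rw [max_eq_left]; linarith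
  have h1 : cc (2*N+1) k = 0 := by unfold cc; rw [max_eq_left]; push_cast; linarith
  rw [h0, h1]
  norm_num

def VK (N : ℕ) (x : ℝ) : ℝ := (2/(2*(N:ℝ)+2)) * FK (2*N+1) x - (1/((N:ℝ)+1)) * FK N x

lemma VK_cont (N : ℕ) : Continuous (VK N) :=
  (continuous_const.mul (FK_cont _)).sub (continuous_const.mul (FK_cont _))

lemma cont_ofReal_mul_ee {g : ℝ → ℝ} (hg : Continuous g) (k : ℤ) :
    Continuous fun x => ((g x : ℝ):ℂ) * ee k x :=
  (Complex.continuous_ofReal.comp hg).mul (ee_cont k)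

lemma integral_VK_ee (N : ℕ) (k : ℤ) :
    ∫ x in (0:ℝ)..(2*π), ((VK N x : ℝ):ℂ) * ee (-k) x = ((2*π) * vv N k : ℝ) := by
  have h : ∀ x : ℝ, ((VK N x : ℝ):ℂ) * ee (-k) x
      = (2/(2*(N:ℝ)+2) : ℂ) * (((FK (2*N+1) x:ℝ):ℂ) * ee (-k) x)
        - (1/((N:ℝ)+1) : ℂ) * (((FK N x:ℝ):ℂ) * ee (-k) x) := by
    intro x
    unfold VK
    push_cast
    ring
  simp_rw [h]
  rw [intervalIntegral.integral_sub, intervalIntegral.integral_const_mul,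
      intervalIntegral.integral_const_mul, integral_FK_ee', integral_FK_ee']
  · unfold vv
    push_cast
    have hN : ((N:ℂ)+1) ≠ 0 := by
      have : ((N:ℝ)+1) ≠ 0 := by positivity
      exact_mod_cast (by exact_mod_cast this : (((N:ℝ)+1 : ℝ):ℂ) ≠ 0)
    field_simp
  · exact ((continuous_const.mul (cont_ofReal_mul_ee (FK_cont _) _)).intervalIntegrable _ _)
  · exact ((continuous_const.mul (cont_ofReal_mul_ee (FK_cont _) _)).intervalIntegrable _ _)

lemma integral_FK (N : ℕ) :
    ∫ x in (0:ℝ)..(2*π), FK N x = 2*π*((N:ℝ)+1) := by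
  have h := integral_FK_ee' N 0
  have h0 : ∀ x : ℝ, ((FK N x : ℝ):ℂ) * ee (-(0:ℤ)) x = ((FK N x : ℝ):ℂ) := by
    intro x
    simp [ee]
  simp_rw [h0] at h
  rw [intervalIntegral.integral_ofReal] at h
  have := Complex.ofReal_inj.mp h
  rw [this]
  unfold cc
  rw [max_eq_right (by simp; positivity)]
  push_cast
  norm_num

lemma integral_VK_abs (N : ℕ) :
    (∫ x in (0:ℝ)..(2*π), |VK N x|) ≤ 6*π := by
  have hpt : ∀ x : ℝ, |VK N x| ≤ (2/(2*(N:ℝ)+2)) * FK (2*N+1) x + (1/((N:ℝ)+1)) * FK N x := by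
    intro x
    refine (abs_sub _ _).trans ?_
    have h1 : (0:ℝ) ≤ (2/(2*(N:ℝ)+2)) * FK (2*N+1) x := by
      have := FK_nonneg (2*N+1) x; positivity
    have h2 : (0:ℝ) ≤ (1/((N:ℝ)+1)) * FK N x := by
      have := FK_nonneg N x; positivity
    rw [_root_.abs_of_nonneg h1, _root_.abs_of_nonneg h2]
  have hint : (∫ x in (0:ℝ)..(2*π), |VK N x|)
      ≤ ∫ x in (0:ℝ)..(2*π), ((2/(2*(N:ℝ)+2)) * FK (2*N+1) x + (1/((N:ℝ)+1)) * FK N x) := by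
    apply intervalIntegral.integral_mono_on (by positivity)
    · exact ((VK_cont N).abs).intervalIntegrable _ _
    · exact ((continuous_const.mul (FK_cont _)).add (continuous_const.mul (FK_cont _))).intervalIntegrable _ _
    · intro x _; exact hpt x
  refine hint.trans ?_
  rw [intervalIntegral.integral_add, intervalIntegral.integral_const_mul,
      intervalIntegral.integral_const_mul, integral_FK, integral_FK]
  · have hN : (0:ℝ) < (N:ℝ)+1 := by positivity
    have hcast : ((2*N+1 : ℕ):ℝ) = 2*(N:ℝ)+1 := by push_cast; ring
    rw [hcast]
    have e1 : 2/(2*(N:ℝ)+2) * (2*π*(2*(N:ℝ)+1+1)) = 2*(2*π) := by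
      field_simp
      ring
    have e2 : 1/((N:ℝ)+1) * (2*π*((N:ℝ)+1)) = 2*π := by
      field_simp
    rw [e1, e2]
    have : (0:ℝ) ≤ π := Real.pi_pos.le
    linarith
  · exact (continuous_const.mul (FK_cont _)).intervalIntegrable _ _
  · exact (continuous_const.mul (FK_cont _)).intervalIntegrable _ _

lemma vv_neg (N : ℕ) (k : ℤ) : vv N (-k) = vv N k := by
  unfold vv cc
  push_cast
  rw [abs_neg]

def lam (M N : ℕ) (k : ℤ) : ℝ := vv M k - vv N k

def WK (M N : ℕ) (x : ℝ) : ℝ := VK M x - VK N x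

lemma WK_cont (M N : ℕ) : Continuous (WK M N) := (VK_cont M).sub (VK_cont N)

lemma lam_neg (M N : ℕ) (k : ℤ) : lam M N (-k) = lam M N k := by
  unfold lam; rw [vv_neg, vv_neg]

lemma integral_ee_WK (M N : ℕ) (k : ℤ) :
    ∫ x in (0:ℝ)..(2*π), ee k x * ((WK M N x : ℝ):ℂ) = ((2*π) * lam M N k : ℝ) := by
  have h : ∀ x : ℝ, ee k x * ((WK M N x : ℝ):ℂ)
      = ((VK M x : ℝ):ℂ) * ee (-(-k)) x - ((VK N x : ℝ):ℂ) * ee (-(-k)) x := by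
    intro x
    unfold WK
    push_cast
    ring_nf
  simp_rw [h]
  rw [intervalIntegral.integral_sub ((cont_ofReal_mul_ee (VK_cont M) _).intervalIntegrable _ _)
      ((cont_ofReal_mul_ee (VK_cont N) _).intervalIntegrable _ _),
    integral_VK_ee, integral_VK_ee]
  unfold lam
  rw [vv_neg, vv_neg]
  push_cast
  ring

lemma integral_poly_WK (M N : ℕ) (s : Finset ℤ) (d : ℤ → ℂ) :
    ∫ x in (0:ℝ)..(2*π), (∑ k ∈ s, d k * ee k x) * ((WK M N x : ℝ):ℂ)
      = (2*π) * ∑ k ∈ s, d k * ((lam M N k : ℝ):ℂ) := by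
  have h : ∀ x : ℝ, (∑ k ∈ s, d k * ee k x) * ((WK M N x : ℝ):ℂ)
      = ∑ k ∈ s, d k * (ee k x * ((WK M N x : ℝ):ℂ)) := by
    intro x
    rw [Finset.sum_mul]
    congr 1; ext k; ring
  simp_rw [h]
  have hcont : ∀ k : ℤ, Continuous fun x => d k * (ee k x * ((WK M N x : ℝ):ℂ)) := by
    intro k
    apply continuous_const.mul
    exact (ee_cont k).mul (Complex.continuous_ofReal.comp (WK_cont M N))
  rw [intervalIntegral.integral_finset_sum (fun k _ => (hcont k).intervalIntegrable _ _)]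
  rw [Finset.mul_sum]
  congr 1; ext k
  rw [intervalIntegral.integral_const_mul, integral_ee_WK]
  push_cast
  ring

lemma integral_WK_abs (M N : ℕ) :
    (∫ x in (0:ℝ)..(2*π), |WK M N x|) ≤ 12*π := by
  have hpt : ∀ x : ℝ, |WK M N x| ≤ |VK M x| + |VK N x| := fun x => abs_sub _ _
  have hint : (∫ x in (0:ℝ)..(2*π), |WK M N x|)
      ≤ ∫ x in (0:ℝ)..(2*π), (|VK M x| + |VK N x|) := by
    apply intervalIntegral.integral_mono_on (by positivity)
    · exact ((WK_cont M N).abs).intervalIntegrable _ _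
    · exact (((VK_cont M).abs).add ((VK_cont N).abs)).intervalIntegrable _ _
    · intro x _; exact hpt x
  refine hint.trans ?_
  rw [intervalIntegral.integral_add (((VK_cont M).abs).intervalIntegrable _ _)
      (((VK_cont N).abs).intervalIntegrable _ _)]
  have := integral_VK_abs M
  have := integral_VK_abs N
  linarith

lemma cast_abs_int (k : ℤ) : |(k:ℝ)| = ((|k| : ℤ) : ℝ) := by rw [Int.cast_abs]

lemma lam_nonneg {M N : ℕ} (hNM : N ≤ M) (k : ℤ) : 0 ≤ lam M N k :=
  sub_nonneg.mpr (vv_mono hNM k)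

lemma lam_zero_small {M N : ℕ} (hNM : N ≤ M) {k : ℤ} (h : |k| ≤ (N:ℤ)+1) : lam M N k = 0 := by
  have hr : |(k:ℝ)| ≤ (N:ℝ)+1 := by rw [cast_abs_int]; exact_mod_cast h
  have hM : (N:ℝ)+1 ≤ (M:ℝ)+1 := by
    have : (N:ℝ) ≤ M := by exact_mod_cast hNM
    linarith
  unfold lam
  rw [vv_eq_one hr, vv_eq_one (le_trans hr hM)]
  ring

lemma lam_zero_big {M N : ℕ} (hNM : N ≤ M) {k : ℤ} (h : 2*(M:ℤ)+2 ≤ |k|) : lam M N k = 0 := by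
  have hr : 2*(M:ℝ)+2 ≤ |(k:ℝ)| := by rw [cast_abs_int]; exact_mod_cast h
  have hr' : 2*(N:ℝ)+2 ≤ |(k:ℝ)| := by
    have : (N:ℝ) ≤ M := by exact_mod_cast hNM
    linarith
  unfold lam
  rw [vv_eq_zero hr, vv_eq_zero hr']
  ring

lemma lam_ge_half {M N : ℕ} (hN1 : 1 ≤ N) {k : ℤ} (h1 : 2*(N:ℤ)+1 ≤ |k|)
    (h2 : |k| ≤ (M:ℤ)+1) : 1/2 ≤ lam M N k := by
  have hr1 : 2*(N:ℝ)+1 ≤ |(k:ℝ)| := by rw [cast_abs_int]; exact_mod_cast h1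
  have hr2 : |(k:ℝ)| ≤ (M:ℝ)+1 := by rw [cast_abs_int]; exact_mod_cast h2
  unfold lam
  rw [vv_eq_one hr2]
  have := vv_le_half hN1 hr1
  linarith

lemma En_nonneg (n : ℕ) (f : ℝ → ℂ) : 0 ≤ En n f := by
  apply Real.sInf_nonneg
  rintro y ⟨c, rfl⟩
  exact Real.iSup_nonneg (fun x => norm_nonneg _)

lemma En_exists_near (n : ℕ) (f : ℝ → ℂ) {ε : ℝ} (hε : 0 < ε) :
    ∃ c : ℤ → ℂ, (⨆ x : ℝ, ‖f x -
      ∑ k ∈ Finset.Icc (-(n : ℤ)) (n : ℤ), c k * Complex.exp ((k : ℂ) * (x : ℂ) * Complex.I)‖)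
      < En n f + ε := by
  have hne : { y : ℝ | ∃ c : ℤ → ℂ,
      y = ⨆ x : ℝ, ‖f x -
      ∑ k ∈ Finset.Icc (-(n : ℤ)) (n : ℤ), c k * Complex.exp ((k : ℂ) * (x : ℂ) * Complex.I)‖}.Nonempty :=
    ⟨_, ⟨0, rfl⟩⟩
  obtain ⟨y, ⟨c, rfl⟩, hlt⟩ := Real.lt_sInf_add_pos hne hε
  exact ⟨c, hlt⟩

lemma ee_zero (k : ℤ) : ee k 0 = 1 := by unfold ee; norm_num

lemma ee_zero' (x : ℝ) : ee 0 x = 1 := by unfold ee; norm_num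

lemma ee_def' (k : ℤ) (x : ℝ) : Complex.exp ((k:ℂ) * (x:ℂ) * Complex.I) = ee k x := rfl

lemma ee_neg_x (k : ℤ) (x : ℝ) : ee k (-x) = ee (-k) x := by
  unfold ee; push_cast; ring_nf

lemma ee_periodic (k : ℤ) (x : ℝ) : ee k (x + 2*π) = ee k x := by
  unfold ee
  push_cast
  rw [show (k:ℂ)*((x:ℂ)+2*(π:ℂ))*Complex.I = (k:ℂ)*(x:ℂ)*Complex.I + (k:ℂ)*(2*(π:ℂ)*Complex.I) by ring,
    Complex.exp_add, Complex.exp_int_mul_two_pi_mul_I, mul_one]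

lemma sum_shift {M : Type*} [AddCommMonoid M] (h : ℕ → M) (N : ℕ) :
    ∑ i ∈ Finset.range N, h (i+1) = ∑ k ∈ Finset.Icc 1 N, h k := by
  induction N with
  | zero => simp
  | succ n ih =>
    rw [Finset.sum_range_succ, ih,
      show Finset.Icc 1 (n+1) = insert (n+1) (Finset.Icc 1 n) by
        ext k; simp only [Finset.mem_Icc, Finset.mem_insert]; omega,
      Finset.sum_insert (by simp)]
    ring_nf
    rw [add_comm]

lemma sum_Icc_neg_comm (F : ℤ → ℂ) (n : ℕ) :
    ∑ k ∈ Finset.Icc (-(n:ℤ)) (n:ℤ), F (-k) = ∑ k ∈ Finset.Icc (-(n:ℤ)) (n:ℤ), F k := by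
  apply Finset.sum_nbij' (fun k => -k) (fun k => -k)
  · intro k hk; simp only [Finset.mem_Icc] at hk ⊢; omega
  · intro k hk; simp only [Finset.mem_Icc] at hk ⊢; omega
  · intro k _; ring
  · intro k _; ring
  · intro k _; rfl

end S7

open S7 in
theorem stmt_7 (fhat : ℤ → ℂ) (f : ℝ → ℂ) (θ₁ : ℝ) (hθ₁ : 0 ≤ θ₁) (hθ₁' : θ₁ < Real.pi / 2)
    (hK : ∀ n : ℕ, 1 ≤ n → (fhat (n : ℤ) + fhat (-(n : ℤ))) ∈ Kset θ₁)
    (hconv : ∀ x : ℝ, Filter.Tendsto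
      (fun N : ℕ => ∑ k ∈ Finset.Icc (-(N : ℤ)) (N : ℤ),
        fhat k * Complex.exp ((k : ℂ) * (x : ℂ) * Complex.I))
      Filter.atTop (nhds (f x)))
    (hcont : Continuous f) :
    ∃ C : ℝ, 0 < C ∧ ∀ n : ℕ, 1 ≤ n → ∀ m : ℕ,
      (∑ k ∈ Finset.Icc (2 * n + 1) m, ‖fhat (k : ℤ) + fhat (-(k : ℤ))‖) ≤
        C * En n f := by
  classical
  have hπ : 0 < π := Real.pi_pos
  have hcos : 0 < Real.cos θ₁ := Real.cos_pos_of_mem_Ioo ⟨by linarith, hθ₁'⟩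
  set a : ℤ → ℂ := fun k => fhat k + fhat (-k) with ha
  have haev : ∀ k : ℤ, a (-k) = a k := by
    intro k; simp only [ha, neg_neg]; ring
  -- real part lower bound from the sector condition
  have hre : ∀ k : ℤ, 1 ≤ k → ‖a k‖ * Real.cos θ₁ ≤ (a k).re := by
    intro k hk
    have h1 : (1:ℕ) ≤ k.toNat := by omega
    have hKk := hK k.toNat h1
    rw [Kset, Set.mem_setOf_eq] at hKk
    have hcast : ((k.toNat : ℕ) : ℤ) = k := by omega
    rw [hcast] at hKk
    have harg : |Complex.arg (a k)| ≤ θ₁ := hKk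
    have h2 : Real.cos θ₁ ≤ Real.cos (Complex.arg (a k)) := by
      rw [← Real.cos_abs (Complex.arg (a k))]
      exact Real.cos_le_cos_of_nonneg_of_le_pi (abs_nonneg _) (by linarith) harg
    calc ‖a k‖ * Real.cos θ₁
        ≤ ‖a k‖ * Real.cos (Complex.arg (a k)) :=
          mul_le_mul_of_nonneg_left h2 (norm_nonneg _)
      _ = (a k).re := Complex.norm_mul_cos_arg _
  have hre0 : ∀ k : ℤ, 1 ≤ k → 0 ≤ (a k).re := fun k hk =>
    le_trans (by positivity) (hre k hk)
  -- convergence of the symmetric partial sums at 0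
  have hsum0 : Filter.Tendsto (fun N : ℕ => ∑ k ∈ Finset.Icc 1 N, (a (k:ℤ)).re)
      Filter.atTop (nhds ((f 0 - fhat 0).re)) := by
    have h0 := hconv 0
    have heq : ∀ N : ℕ, (∑ k ∈ Finset.Icc (-(N:ℤ)) (N:ℤ),
        fhat k * Complex.exp ((k:ℂ)*((0:ℝ):ℂ)*Complex.I))
        = fhat 0 + ∑ k ∈ Finset.Icc 1 N, a (k:ℤ) := by
      intro N
      have h1 : ∀ k : ℤ, fhat k * Complex.exp ((k:ℂ)*((0:ℝ):ℂ)*Complex.I) = fhat k := by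
        intro k; norm_num
      simp_rw [h1]
      rw [sum_Icc_symm fhat N]
    rw [Filter.tendsto_congr heq] at h0
    have h1 : Filter.Tendsto (fun N : ℕ => ∑ k ∈ Finset.Icc 1 N, a (k:ℤ))
        Filter.atTop (nhds (f 0 - fhat 0)) := by
      have h2 := h0.sub_const (fhat 0)
      apply h2.congr
      intro N; ring
    have h2 := (Complex.continuous_re.tendsto _).comp h1
    apply h2.congr
    intro N
    simp [Complex.re_sum]
  -- summability
  set r : ℕ → ℝ := fun i => ‖a ((i:ℤ)+1)‖ with hr
  have hrsum : Summable r := by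
    have hmono : Monotone (fun N : ℕ => ∑ k ∈ Finset.Icc 1 N, (a (k:ℤ)).re) := by
      intro N M hNM
      apply Finset.sum_le_sum_of_subset_of_nonneg (Finset.Icc_subset_Icc_right hNM)
      intro k hk _
      apply hre0
      exact_mod_cast (Finset.mem_Icc.mp hk).1
    have hbd := hmono.ge_of_tendsto hsum0
    have hsum_re : Summable (fun i : ℕ => (a ((i:ℤ)+1)).re) := by
      apply summable_of_sum_range_le (c := (f 0 - fhat 0).re)
      · intro i
        apply hre0
        have : (0:ℤ) ≤ (i:ℤ) := Int.natCast_nonneg i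
        omega
      · intro N
        have heq2 : ∑ i ∈ Finset.range N, (a ((i:ℤ)+1)).re
            = ∑ k ∈ Finset.Icc 1 N, (a (k:ℤ)).re := by
          rw [← sum_shift (fun k : ℕ => (a (k:ℤ)).re) N]
          apply Finset.sum_congr rfl
          intro i _
          norm_num
        rw [heq2]
        exact hbd N
    apply Summable.of_nonneg_of_le (fun i => norm_nonneg _)
      (fun i => ?_) (hsum_re.div_const (Real.cos θ₁))
    have h1 : (1:ℤ) ≤ (i:ℤ)+1 := by
      have : (0:ℤ) ≤ (i:ℤ) := Int.natCast_nonneg i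
      omega
    exact (le_div_iff₀ hcos).mpr (hre _ h1)
  set t : ℕ → ℝ := fun N => ∑' i, r (i + N) with htdef
  have ht0 : Filter.Tendsto t Filter.atTop (nhds 0) := tendsto_sum_nat_add r
  have htnn : ∀ N, 0 ≤ t N := fun N => tsum_nonneg (fun i => norm_nonneg _)
  have htail_sum : ∀ N M : ℕ, ∑ k ∈ Finset.Icc (N+1) M, ‖a (k:ℤ)‖ ≤ t N := by
    intro N M
    rw [← Finset.Ico_add_one_right_eq_Icc, Finset.sum_Ico_eq_sum_range]
    have heq : ∀ i : ℕ, ‖a (((N+1+i):ℕ):ℤ)‖ = r (i + N) := by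
      intro i
      simp only [hr]
      congr 2
      push_cast
      ring
    rw [Finset.sum_congr rfl (fun i _ => heq i)]
    exact Summable.sum_le_tsum _ (fun i _ => norm_nonneg _)
      ((summable_nat_add_iff N).mpr hrsum)
  -- the even part g and its trig approximants G
  set g : ℝ → ℂ := fun x => (f x + f (-x))/2 with hg
  have hgcont : Continuous g := by
    apply Continuous.div_const
    exact hcont.add (hcont.comp continuous_neg)
  set b : ℤ → ℂ := fun k => if k = 0 then fhat 0 else a k / 2 with hb
  set G : ℕ → ℝ → ℂ := fun N x => ∑ k ∈ Finset.Icc (-(N:ℤ)) (N:ℤ), b k * ee k x with hG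
  have hGcont : ∀ N, Continuous (G N) := by
    intro N
    apply continuous_finset_sum
    exact fun k _ => continuous_const.mul (ee_cont k)
  have hGs : ∀ N x, G N x = fhat 0 + ∑ k ∈ Finset.Icc 1 N, (a (k:ℤ)/2) * (ee k x + ee (-(k:ℤ)) x) := by
    intro N x
    simp only [hG]
    rw [sum_Icc_symm (fun k => b k * ee k x) N]
    have h0 : b 0 * ee 0 x = fhat 0 := by simp [hb, ee_zero']
    rw [h0]
    congr 1
    apply Finset.sum_congr rfl
    intro k hk
    have hk1 : 1 ≤ k := (Finset.mem_Icc.mp hk).1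
    have hkz : ((k:ℕ):ℤ) ≠ 0 := by exact_mod_cast Nat.one_le_iff_ne_zero.mp hk1
    have hkz' : (-(k:ℤ)) ≠ 0 := by omega
    simp only [hb, if_neg hkz, if_neg hkz', haev]
    ring
  have hGg : ∀ x, Filter.Tendsto (fun N => G N x) Filter.atTop (nhds (g x)) := by
    intro x
    have heq : ∀ N : ℕ, ((∑ k ∈ Finset.Icc (-(N:ℤ)) (N:ℤ),
          fhat k * Complex.exp ((k:ℂ)*((x:ℝ):ℂ)*Complex.I))
        + (∑ k ∈ Finset.Icc (-(N:ℤ)) (N:ℤ),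
          fhat k * Complex.exp ((k:ℂ)*((-x:ℝ):ℂ)*Complex.I)))/2 = G N x := by
      intro N
      simp only [ee_def']
      simp_rw [ee_neg_x]
      rw [← Finset.sum_add_distrib,
        sum_Icc_symm (fun k => fhat k * ee k x + fhat k * ee (-k) x) N, hGs N x]
      have hF0 : fhat 0 * ee 0 x + fhat 0 * ee (-0:ℤ) x = 2 * fhat 0 := by
        rw [neg_zero, ee_zero']; ring
      rw [hF0]
      have hFk : ∀ k ∈ Finset.Icc 1 N,
          ((fhat (k:ℤ) * ee (k:ℤ) x + fhat (k:ℤ) * ee (-(k:ℤ)) x)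
            + (fhat (-(k:ℤ)) * ee (-(k:ℤ)) x + fhat (-(k:ℤ)) * ee (-(-(k:ℤ))) x))
          = 2 * ((a (k:ℤ)/2) * (ee (k:ℤ) x + ee (-(k:ℤ)) x)) := by
        intro k _
        rw [neg_neg]
        simp only [ha]
        ring
      rw [Finset.sum_congr rfl hFk, ← Finset.mul_sum]
      ring
    have hcomb := ((hconv x).add (hconv (-x))).div_const 2
    have hgx : (f x + f (-x))/2 = g x := by simp only [hg]
    rw [hgx] at hcomb
    exact hcomb.congr heq
  have htail : ∀ (N : ℕ) (x : ℝ), ‖g x - G N x‖ ≤ t N := by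
    intro N x
    have hM : ∀ M, N ≤ M → ‖G M x - G N x‖ ≤ t N := by
      intro M hNM
      have hIoc1 : Finset.Ioc 0 N = Finset.Icc 1 N := by ext k; simp; omega
      have hIoc2 : Finset.Ioc N M = Finset.Icc (N+1) M := by ext k; simp
      have hIoc3 : Finset.Ioc 0 M = Finset.Icc 1 M := by ext k; simp; omega
      have hsplit := Finset.sum_Ioc_consecutive
        (fun k : ℕ => (a (k:ℤ)/2) * (ee (k:ℤ) x + ee (-(k:ℤ)) x)) (Nat.zero_le N) hNM
      rw [hIoc1, hIoc2, hIoc3] at hsplit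
      have hdiff : G M x - G N x
          = ∑ k ∈ Finset.Icc (N+1) M, (a (k:ℤ)/2) * (ee (k:ℤ) x + ee (-(k:ℤ)) x) := by
        rw [hGs M x, hGs N x, ← hsplit]
        ring
      rw [hdiff]
      refine le_trans (norm_sum_le _ _)
        (le_trans (Finset.sum_le_sum ?_) (htail_sum N M))
      intro k hk
      rw [norm_mul, norm_div, Complex.norm_two]
      have h2 : ‖ee (k:ℤ) x + ee (-(k:ℤ)) x‖ ≤ 2 :=
        le_trans (norm_add_le _ _) (by rw [ee_abs, ee_abs]; norm_num)
      have h3 := norm_nonneg (a (k:ℤ))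
      have h4 := norm_nonneg (ee (k:ℤ) x + ee (-(k:ℤ)) x)
      nlinarith
    have hlim : Filter.Tendsto (fun M => ‖G M x - G N x‖)
        Filter.atTop (nhds (‖g x - G N x‖)) :=
      (continuous_norm.tendsto _).comp ((hGg x).sub_const (G N x))
    exact le_of_tendsto hlim (Filter.eventually_atTop.mpr ⟨N, hM⟩)
  -- boundedness of f
  have hfb : ∃ Mf : ℝ, ∀ x, ‖f x‖ ≤ Mf := by
    have hper : Function.Periodic f (2*π) := by
      intro x
      apply tendsto_nhds_unique ?_ (hconv x)
      have h2 := hconv (x + 2*π)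
      apply h2.congr
      intro N
      apply Finset.sum_congr rfl
      intro k _
      congr 1
      exact ee_periodic k x
    obtain ⟨Rf, hRf⟩ := (hper.isBounded_of_continuous (by positivity) hcont).subset_closedBall 0
    refine ⟨Rf, fun x => ?_⟩
    have hx : f x ∈ Metric.closedBall 0 Rf := hRf ⟨x, rfl⟩
    rw [Metric.mem_closedBall] at hx
    simpa [Complex.dist_eq] using hx
  -- main estimate
  refine ⟨12 / Real.cos θ₁, by positivity, ?_⟩
  intro n hn m
  have key : ∀ ε : ℝ, 0 < ε →
      (∑ k ∈ Finset.Icc (2*n+1) m, ‖a (k:ℤ)‖) ≤ 12/Real.cos θ₁ * (En n f + ε) := by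
    intro ε hε
    obtain ⟨Mf, hMf⟩ := hfb
    obtain ⟨c, hc⟩ := En_exists_near n f hε
    set T : ℝ → ℂ := fun x => ∑ k ∈ Finset.Icc (-(n:ℤ)) (n:ℤ),
      c k * Complex.exp ((k:ℂ)*(x:ℂ)*Complex.I) with hT
    have hTcont : Continuous T := by
      apply continuous_finset_sum
      intro k _
      exact continuous_const.mul (by simp only [ee_def']; exact ee_cont k)
    have hbdd : BddAbove (Set.range fun x => ‖f x -
        ∑ k ∈ Finset.Icc (-(n:ℤ)) (n:ℤ), c k * Complex.exp ((k:ℂ)*(x:ℂ)*Complex.I)‖) := by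
      refine ⟨Mf + ∑ k ∈ Finset.Icc (-(n:ℤ)) (n:ℤ), ‖c k‖, ?_⟩
      rintro _ ⟨x, rfl⟩
      have hTb : ‖T x‖ ≤ ∑ k ∈ Finset.Icc (-(n:ℤ)) (n:ℤ), ‖c k‖ := by
        simp only [hT]
        refine le_trans (norm_sum_le _ _) (Finset.sum_le_sum ?_)
        intro k _
        rw [norm_mul, ee_def', ee_abs, mul_one]
      calc ‖f x - T x‖ ≤ ‖f x‖ + ‖T x‖ := by
            simpa [sub_eq_add_neg] using norm_add_le (f x) (-T x)
        _ ≤ _ := add_le_add (hMf x) hTb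
    have hTpt : ∀ x, ‖f x - T x‖ ≤ En n f + ε := by
      intro x
      refine le_trans ?_ hc.le
      exact le_ciSup hbdd x
    have hEnn : 0 ≤ En n f + ε := le_trans (norm_nonneg _) (hTpt 0)
    set c' : ℤ → ℂ := fun k => (c k + c (-k))/2 with hc'
    set T' : ℝ → ℂ := fun x => ∑ k ∈ Finset.Icc (-(n:ℤ)) (n:ℤ), c' k * ee k x with hT'
    have hT'cont : Continuous T' :=
      continuous_finset_sum _ (fun k _ => continuous_const.mul (ee_cont k))
    have hT'eq : ∀ x, T' x = (T x + T (-x))/2 := by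
      intro x
      have h1 : T (-x) = ∑ k ∈ Finset.Icc (-(n:ℤ)) (n:ℤ), c (-k) * ee k x := by
        simp only [hT, ee_def']
        simp_rw [ee_neg_x]
        have h2 := sum_Icc_neg_comm (fun k => c (-k) * ee k x) n
        simp only [neg_neg] at h2
        exact h2
      rw [h1]
      simp only [hT', hT, hc']
      rw [← Finset.sum_add_distrib, Finset.sum_div]
      apply Finset.sum_congr rfl
      intro k _
      rw [ee_def']
      ring
    have hT'pt : ∀ x, ‖g x - T' x‖ ≤ En n f + ε := by
      intro x
      rw [hT'eq x]
      have hgx : g x = (f x + f (-x))/2 := by simp only [hg]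
      rw [hgx, show (f x + f (-x))/2 - (T x + T (-x))/2
        = ((f x - T x) + (f (-x) - T (-x)))/2 by ring, norm_div, Complex.norm_two]
      have h1 := hTpt x
      have h2 := hTpt (-x)
      have h3 := norm_add_le (f x - T x) (f (-x) - T (-x))
      linarith
    set m' : ℕ := max m (n+1) with hm'
    have hnm' : n ≤ m' := le_trans (Nat.le_succ n) (le_max_right _ _)
    have hmm' : m ≤ m' := le_max_left _ _
    set K0 : ℕ := 2*m'+1 with hK0
    have hWint : ∀ h : ℝ → ℂ, Continuous h →
        IntervalIntegrable (fun x => h x * ((WK m' n x : ℝ):ℂ))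
          MeasureTheory.volume 0 (2*π) := fun h hh =>
      ((hh.mul (Complex.continuous_ofReal.comp (WK_cont m' n))).intervalIntegrable _ _)
    have hT'W : ∫ x in (0:ℝ)..(2*π), T' x * ((WK m' n x : ℝ):ℂ) = 0 := by
      simp only [hT']
      rw [integral_poly_WK]
      have hz : ∀ k ∈ Finset.Icc (-(n:ℤ)) (n:ℤ), c' k * ((lam m' n k : ℝ):ℂ) = 0 := by
        intro k hk
        obtain ⟨h1, h2⟩ := Finset.mem_Icc.mp hk
        rw [lam_zero_small hnm' (by rw [abs_le]; omega)]
        simp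
      rw [Finset.sum_congr rfl hz, Finset.sum_const_zero, mul_zero]
    set Sc : ℂ := ∑ k ∈ Finset.Icc 1 K0, a (k:ℤ) * ((lam m' n (k:ℤ) : ℝ):ℂ) with hSc
    have hGW : ∀ N : ℕ, K0 ≤ N →
        ∫ x in (0:ℝ)..(2*π), G N x * ((WK m' n x : ℝ):ℂ) = (2*π) * Sc := by
      intro N hN
      simp only [hG]
      rw [integral_poly_WK]
      congr 1
      rw [sum_Icc_symm (fun k => b k * ((lam m' n k : ℝ):ℂ)) N]
      have h00 : b 0 * ((lam m' n 0 : ℝ):ℂ) = 0 := by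
        rw [lam_zero_small hnm' (by simp; omega)]
        simp
      rw [h00, zero_add]
      have hterm : ∀ k ∈ Finset.Icc 1 N,
          (b (k:ℤ) * ((lam m' n (k:ℤ):ℝ):ℂ) + b (-(k:ℤ)) * ((lam m' n (-(k:ℤ)):ℝ):ℂ))
          = a (k:ℤ) * ((lam m' n (k:ℤ):ℝ):ℂ) := by
        intro k hk
        have hk1 := (Finset.mem_Icc.mp hk).1
        have hkz : ((k:ℕ):ℤ) ≠ 0 := by exact_mod_cast Nat.one_le_iff_ne_zero.mp hk1
        have hkz' : (-(k:ℤ)) ≠ 0 := by omega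
        rw [lam_neg]
        simp only [hb, if_neg hkz, if_neg hkz', haev]
        ring
      rw [Finset.sum_congr rfl hterm]
      symm
      apply Finset.sum_subset (Finset.Icc_subset_Icc_right hN)
      intro k hk hk'
      have h1 : K0 < k := by
        simp only [Finset.mem_Icc] at hk hk'
        omega
      have habs : |((k:ℕ):ℤ)| = (k:ℤ) := abs_of_nonneg (Int.natCast_nonneg _)
      rw [lam_zero_big hnm' (by rw [habs]; exact_mod_cast (by omega : 2*m'+2 ≤ k))]
      simp
    have hgW : ∫ x in (0:ℝ)..(2*π), g x * ((WK m' n x : ℝ):ℂ) = (2*π) * Sc := by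
      have hbound : ∀ N : ℕ, ‖(∫ x in (0:ℝ)..(2*π), G N x * ((WK m' n x:ℝ):ℂ))
          - ∫ x in (0:ℝ)..(2*π), g x * ((WK m' n x:ℝ):ℂ)‖ ≤ t N * (12*π) := by
        intro N
        rw [← intervalIntegral.integral_sub (hWint (G N) (hGcont N)) (hWint g hgcont)]
        have heq : ∀ x : ℝ, G N x * ((WK m' n x:ℝ):ℂ) - g x * ((WK m' n x:ℝ):ℂ)
            = (G N x - g x) * ((WK m' n x:ℝ):ℂ) := by intro x; ring
        simp_rw [heq]
        refine le_trans (intervalIntegral.norm_integral_le_integral_norm (by positivity)) ?_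
        have hpt : ∀ x : ℝ, ‖(G N x - g x) * ((WK m' n x:ℝ):ℂ)‖ ≤ t N * |WK m' n x| := by
          intro x
          rw [norm_mul, Complex.norm_real, Real.norm_eq_abs]
          apply mul_le_mul_of_nonneg_right ?_ (abs_nonneg _)
          rw [← norm_neg, neg_sub]
          exact htail N x
        have hmono : (∫ x in (0:ℝ)..(2*π), ‖(G N x - g x) * ((WK m' n x:ℝ):ℂ)‖)
            ≤ ∫ x in (0:ℝ)..(2*π), t N * |WK m' n x| := by
          apply intervalIntegral.integral_mono_on (by positivity)
          · exact (((hGcont N).sub hgcont).mul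
              (Complex.continuous_ofReal.comp (WK_cont m' n))).norm.intervalIntegrable _ _
          · exact (continuous_const.mul (WK_cont m' n).abs).intervalIntegrable _ _
          · intro x _; exact hpt x
        refine hmono.trans ?_
        rw [intervalIntegral.integral_const_mul]
        exact mul_le_mul_of_nonneg_left (integral_WK_abs m' n) (htnn N)
      have hzero : Filter.Tendsto (fun N : ℕ => (∫ x in (0:ℝ)..(2*π), G N x * ((WK m' n x:ℝ):ℂ))
          - ∫ x in (0:ℝ)..(2*π), g x * ((WK m' n x:ℝ):ℂ)) Filter.atTop (nhds 0) := by
        apply squeeze_zero_norm hbound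
        have := ht0.mul_const (12*π)
        simpa using this
      have hlim : Filter.Tendsto (fun N : ℕ => ∫ x in (0:ℝ)..(2*π), G N x * ((WK m' n x:ℝ):ℂ))
          Filter.atTop (nhds (∫ x in (0:ℝ)..(2*π), g x * ((WK m' n x:ℝ):ℂ))) := by
        have := hzero.add_const (∫ x in (0:ℝ)..(2*π), g x * ((WK m' n x:ℝ):ℂ))
        simpa using this
      have hlim2 : Filter.Tendsto (fun N : ℕ => ∫ x in (0:ℝ)..(2*π), G N x * ((WK m' n x:ℝ):ℂ))
          Filter.atTop (nhds ((2*π) * Sc)) := by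
        apply Filter.Tendsto.congr' ?_ tendsto_const_nhds
        filter_upwards [Filter.eventually_ge_atTop K0] with N hN
        exact (hGW N hN).symm
      exact tendsto_nhds_unique hlim hlim2
    have hDbound : ‖(∫ x in (0:ℝ)..(2*π), g x * ((WK m' n x:ℝ):ℂ))
        - ∫ x in (0:ℝ)..(2*π), T' x * ((WK m' n x:ℝ):ℂ)‖ ≤ (En n f + ε) * (12*π) := by
      rw [← intervalIntegral.integral_sub (hWint g hgcont) (hWint T' hT'cont)]
      have heq : ∀ x : ℝ, g x * ((WK m' n x:ℝ):ℂ) - T' x * ((WK m' n x:ℝ):ℂ)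
          = (g x - T' x) * ((WK m' n x:ℝ):ℂ) := by intro x; ring
      simp_rw [heq]
      refine le_trans (intervalIntegral.norm_integral_le_integral_norm (by positivity)) ?_
      have hpt : ∀ x : ℝ, ‖(g x - T' x) * ((WK m' n x:ℝ):ℂ)‖ ≤ (En n f + ε) * |WK m' n x| := by
        intro x
        rw [norm_mul, Complex.norm_real, Real.norm_eq_abs]
        exact mul_le_mul_of_nonneg_right (hT'pt x) (abs_nonneg _)
      have hmono : (∫ x in (0:ℝ)..(2*π), ‖(g x - T' x) * ((WK m' n x:ℝ):ℂ)‖)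
          ≤ ∫ x in (0:ℝ)..(2*π), (En n f + ε) * |WK m' n x| := by
        apply intervalIntegral.integral_mono_on (by positivity)
        · exact ((hgcont.sub hT'cont).mul
            (Complex.continuous_ofReal.comp (WK_cont m' n))).norm.intervalIntegrable _ _
        · exact (continuous_const.mul (WK_cont m' n).abs).intervalIntegrable _ _
        · intro x _; exact hpt x
      refine hmono.trans ?_
      rw [intervalIntegral.integral_const_mul]
      exact mul_le_mul_of_nonneg_left (integral_WK_abs m' n) hEnn
    rw [hgW, hT'W, sub_zero] at hDbound
    have hScabs : ‖Sc‖ ≤ 6 * (En n f + ε) := by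
      rw [norm_mul] at hDbound
      have h2 : ‖2*(π:ℂ)‖ = 2*π := by
        rw [norm_mul, Complex.norm_two, Complex.norm_real, Real.norm_eq_abs, abs_of_pos hπ]
      rw [h2] at hDbound
      nlinarith [norm_nonneg Sc, hπ, hDbound]
    have hScre : Sc.re ≤ 6 * (En n f + ε) := le_trans (Complex.re_le_norm Sc) hScabs
    have hScre_eq : Sc.re = ∑ k ∈ Finset.Icc 1 K0, (a (k:ℤ)).re * lam m' n (k:ℤ) := by
      rw [hSc, Complex.re_sum]
      apply Finset.sum_congr rfl
      intro k _
      simp [Complex.mul_re]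
    have hchain1 : (∑ k ∈ Finset.Icc (2*n+1) m, ‖a (k:ℤ)‖) * Real.cos θ₁
        ≤ ∑ k ∈ Finset.Icc (2*n+1) m, (a (k:ℤ)).re := by
      rw [Finset.sum_mul]
      apply Finset.sum_le_sum
      intro k hk
      apply hre
      have h1 := (Finset.mem_Icc.mp hk).1
      exact_mod_cast (by omega : 1 ≤ k)
    have hchain2 : ∑ k ∈ Finset.Icc (2*n+1) m, (a (k:ℤ)).re
        ≤ 2 * ∑ k ∈ Finset.Icc 1 K0, (a (k:ℤ)).re * lam m' n (k:ℤ) := by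
      have hstep : ∑ k ∈ Finset.Icc (2*n+1) m, (a (k:ℤ)).re
          ≤ ∑ k ∈ Finset.Icc (2*n+1) m, 2 * ((a (k:ℤ)).re * lam m' n (k:ℤ)) := by
        apply Finset.sum_le_sum
        intro k hk
        obtain ⟨hk1, hk2⟩ := Finset.mem_Icc.mp hk
        have hkk : (1:ℤ) ≤ (k:ℤ) := by exact_mod_cast (by omega : 1 ≤ k)
        have hre' := hre0 _ hkk
        have habs : |((k:ℕ):ℤ)| = (k:ℤ) := abs_of_nonneg (Int.natCast_nonneg _)
        have hlam : 1/2 ≤ lam m' n (k:ℤ) := by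
          apply lam_ge_half hn
          · rw [habs]; exact_mod_cast hk1
          · rw [habs]; exact_mod_cast (by omega : k ≤ m'+1)
        nlinarith
      refine hstep.trans ?_
      rw [← Finset.mul_sum]
      apply mul_le_mul_of_nonneg_left ?_ (by norm_num)
      apply Finset.sum_le_sum_of_subset_of_nonneg
      · intro k hk
        obtain ⟨h1, h2⟩ := Finset.mem_Icc.mp hk
        rw [Finset.mem_Icc]
        omega
      · intro k hk _
        obtain ⟨h1, _⟩ := Finset.mem_Icc.mp hk
        have hkk : (1:ℤ) ≤ (k:ℤ) := by exact_mod_cast h1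
        exact mul_nonneg (hre0 _ hkk) (lam_nonneg hnm' _)
    have h12 : ∑ k ∈ Finset.Icc (2*n+1) m, (a (k:ℤ)).re ≤ 12 * (En n f + ε) := by
      rw [hScre_eq] at hScre
      linarith
    have hfin := (le_div_iff₀ hcos).mpr (hchain1.trans h12)
    refine hfin.trans_eq ?_
    ring
  have hfinal : (∑ k ∈ Finset.Icc (2*n+1) m, ‖a (k:ℤ)‖) ≤ 12/Real.cos θ₁ * En n f := by
    apply le_of_forall_pos_le_add
    intro δ hδ
    have hδ' : 0 < δ * Real.cos θ₁ / 12 := by positivity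
    have := key _ hδ'
    have heq : 12/Real.cos θ₁ * (En n f + δ * Real.cos θ₁ / 12) = 12/Real.cos θ₁ * En n f + δ := by
      field_simp
    linarith [this, heq.le]
  simpa only [ha] using hfinal
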